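/- Let a₁ ≥ ... ≥ aₙ ≥ 0 and τ ∈ [1, n-1] with Σ_{i≤τ} aᵢ ≤ 1 < Σ_{i≤τ+1} aᵢ. Set S₁ = Σ_{i=1}^τ aᵢrᵢ + (1 - (a₁+...+a_τ))r_{τ+1}. Then S₁ takes values in [-1,1] and ‖S - S₁‖₂ ≤ |a₁+...+a_{τ+1} - 1| + (Σ_{i≥τ+2} aᵢ²)^{1/2}, where S = Σᵢ₌₁ⁿ aᵢrᵢ. -/

import Mathlib

lemma rad_orth {n : ℕ} (i j : Fin n) (hij : i ≠ j) :
    ∑ x : Fin n → Bool, ((if x i then (1:ℝ) else -1) * (if x j then (1:ℝ) else -1)) = 0 := by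
  have hinv : Function.Involutive (fun x : Fin n → Bool => Function.update x i (!x i)) := by
    intro x
    funext k
    by_cases hk : k = i
    · subst hk; simp
    · simp [Function.update_of_ne hk]
  set e := hinv.toPerm with he
  set f := fun x : Fin n → Bool =>
    ((if x i then (1:ℝ) else -1) * (if x j then (1:ℝ) else -1)) with hf
  have h1 := Equiv.sum_comp e f
  have h2 : ∀ x : Fin n → Bool, f (e x) = - f x := by
    intro x
    have hi : (e x) i = !x i := by simp [he, Function.Involutive.toPerm]
    have hj : (e x) j = x j := by
      simp [he, Function.Involutive.toPerm, Function.update_of_ne (Ne.symm hij)]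
    simp only [hf, hi, hj]
    cases x i <;> cases x j <;> norm_num
  have h3 : ∑ x : Fin n → Bool, f (e x) = -∑ x : Fin n → Bool, f x := by
    rw [Finset.sum_congr rfl (fun x _ => h2 x)]
    exact Finset.sum_neg_distrib _
  linarith [h1, h3]

lemma rad_sumsq {n : ℕ} (c : Fin n → ℝ) :
    ∑ x : Fin n → Bool, (∑ i, c i * (if x i then (1:ℝ) else -1)) ^ 2
      = 2 ^ n * ∑ i, c i ^ 2 := by
  have expand : ∀ x : Fin n → Bool,
      (∑ i, c i * (if x i then (1:ℝ) else -1)) ^ 2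
      = ∑ i, ∑ j, (c i * c j) *
          ((if x i then (1:ℝ) else -1) * (if x j then (1:ℝ) else -1)) := by
    intro x
    rw [sq, Finset.sum_mul_sum]
    apply Finset.sum_congr rfl; intro i _
    apply Finset.sum_congr rfl; intro j _
    ring
  calc ∑ x : Fin n → Bool, (∑ i, c i * (if x i then (1:ℝ) else -1)) ^ 2
      = ∑ x : Fin n → Bool, ∑ i, ∑ j, (c i * c j) *
          ((if x i then (1:ℝ) else -1) * (if x j then (1:ℝ) else -1)) := by
        exact Finset.sum_congr rfl (fun x _ => expand x)
    _ = ∑ i, ∑ j, (c i * c j) * ∑ x : Fin n → Bool,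
          ((if x i then (1:ℝ) else -1) * (if x j then (1:ℝ) else -1)) := by
        rw [Finset.sum_comm]
        apply Finset.sum_congr rfl; intro i _
        rw [Finset.sum_comm]
        apply Finset.sum_congr rfl; intro j _
        rw [Finset.mul_sum]
    _ = 2 ^ n * ∑ i, c i ^ 2 := by
        rw [Finset.mul_sum]
        apply Finset.sum_congr rfl; intro i _
        rw [Finset.sum_eq_single i]
        · have : ∑ x : Fin n → Bool,
              ((if x i then (1:ℝ) else -1) * (if x i then (1:ℝ) else -1)) = 2 ^ n := by
            have : ∀ x : Fin n → Bool,
                ((if x i then (1:ℝ) else -1) * (if x i then (1:ℝ) else -1)) = 1 := by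
              intro x; cases x i <;> norm_num
            rw [Finset.sum_congr rfl (fun x _ => this x), Finset.sum_const]
            simp [Finset.card_univ]
          rw [this]; ring
        · intro j _ hji
          rw [rad_orth i j (Ne.symm hji)]; ring
        · intro h; exact absurd (Finset.mem_univ i) h

lemma sqrt_add_le' (x y : ℝ) (hx : 0 ≤ x) (hy : 0 ≤ y) :
    Real.sqrt (x + y) ≤ Real.sqrt x + Real.sqrt y := by
  have h : x + y ≤ (Real.sqrt x + Real.sqrt y) ^ 2 := by
    have h1 := Real.sq_sqrt hx
    have h2 := Real.sq_sqrt hy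
    nlinarith [Real.sqrt_nonneg x, Real.sqrt_nonneg y]
  calc Real.sqrt (x + y) ≤ Real.sqrt ((Real.sqrt x + Real.sqrt y) ^ 2) := Real.sqrt_le_sqrt h
    _ = Real.sqrt x + Real.sqrt y := Real.sqrt_sq (by positivity)




/-- With decreasing nonnegative coefficients, `∑_{i≤τ} aᵢ ≤ 1 < ∑_{i≤τ+1} aᵢ`,
and `S₁ = ∑_{i=1}^τ aᵢrᵢ + (1 - (a₁+⋯+a_τ))r_{τ+1}`, the function `S₁` takes
values in `[-1,1]` and `‖S - S₁‖₂ ≤ |a₁+⋯+a_{τ+1} - 1| + (∑_{i≥τ+2} aᵢ²)^{1/2}`.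
Indices are 1-based: the Fin-index `i` corresponds to `a_{i+1}`. -/
theorem stmt_13 (n τ : ℕ) (hτ : 1 ≤ τ) (hτn : τ + 1 ≤ n) (a : Fin n → ℝ)
    (ha : ∀ i j : Fin n, i ≤ j → a j ≤ a i) (ha0 : ∀ i, 0 ≤ a i)
    (hle : ∑ i ∈ Finset.univ.filter (fun i : Fin n => (i : ℕ) + 1 ≤ τ), a i ≤ 1)
    (hgt : 1 < ∑ i ∈ Finset.univ.filter (fun i : Fin n => (i : ℕ) + 1 ≤ τ + 1), a i)
    (S S₁ : (Fin n → Bool) → ℝ)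
    (hS : ∀ x, S x = ∑ i, a i * (if x i then (1 : ℝ) else -1))
    (hS₁ : ∀ x, S₁ x =
      (∑ i ∈ Finset.univ.filter (fun i : Fin n => (i : ℕ) + 1 ≤ τ),
        a i * (if x i then (1 : ℝ) else -1)) +
      (1 - ∑ i ∈ Finset.univ.filter (fun i : Fin n => (i : ℕ) + 1 ≤ τ), a i) *
        (if x ⟨τ, by omega⟩ then (1 : ℝ) else -1)) :
    (∀ x, S₁ x ∈ Set.Icc (-1 : ℝ) 1) ∧
    Real.sqrt ((∑ x : Fin n → Bool, (S x - S₁ x) ^ 2) / 2 ^ n) ≤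
      |(∑ i ∈ Finset.univ.filter (fun i : Fin n => (i : ℕ) + 1 ≤ τ + 1), a i) - 1| +
        Real.sqrt (∑ i ∈ Finset.univ.filter (fun i : Fin n => τ + 2 ≤ (i : ℕ) + 1), a i ^ 2) := by
  set t : Fin n := ⟨τ, by omega⟩ with ht
  set F : Finset (Fin n) := Finset.univ.filter (fun i : Fin n => (i : ℕ) + 1 ≤ τ) with hF
  set Sτ : ℝ := ∑ i ∈ F, a i with hSτ
  set A : ℝ := ∑ i ∈ Finset.univ.filter (fun i : Fin n => (i : ℕ) + 1 ≤ τ + 1), a i with hA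
  have habs : ∀ b : Bool, |if b then (1:ℝ) else -1| = 1 := by intro b; cases b <;> norm_num
  have hSτ0 : 0 ≤ Sτ := Finset.sum_nonneg fun i _ => ha0 i
  -- Part 1
  have part1 : ∀ x, S₁ x ∈ Set.Icc (-1 : ℝ) 1 := by
    intro x
    rw [Set.mem_Icc, ← abs_le, hS₁]
    calc |(∑ i ∈ F, a i * (if x i then (1:ℝ) else -1)) +
          (1 - Sτ) * (if x t then (1:ℝ) else -1)|
        ≤ |∑ i ∈ F, a i * (if x i then (1:ℝ) else -1)| +
          |(1 - Sτ) * (if x t then (1:ℝ) else -1)| := abs_add_le _ _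
      _ ≤ Sτ + (1 - Sτ) := by
          gcongr
          · calc |∑ i ∈ F, a i * (if x i then (1:ℝ) else -1)|
                ≤ ∑ i ∈ F, |a i * (if x i then (1:ℝ) else -1)| :=
                  Finset.abs_sum_le_sum_abs _ _
              _ = Sτ := by
                  apply Finset.sum_congr rfl
                  intro i _
                  rw [abs_mul, habs, abs_of_nonneg (ha0 i), mul_one]
          · rw [abs_mul, habs, abs_of_nonneg (by linarith), mul_one]
      _ = 1 := by ring
  refine ⟨part1, ?_⟩
  -- the difference coefficients
  set c : Fin n → ℝ := fun i =>
    if (i : ℕ) + 1 ≤ τ then 0 else if (i : ℕ) = τ then A - 1 else a i with hc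
  have htF : t ∉ F := by simp [hF, ht]
  have hsplitA : Finset.univ.filter (fun i : Fin n => (i : ℕ) + 1 ≤ τ + 1)
      = insert t F := by
    ext i
    simp [hF, ht, Fin.ext_iff]
    omega
  have hAval : A = a t + Sτ := by rw [hA, hsplitA, Finset.sum_insert htF]
  have key : ∀ x, S x - S₁ x = ∑ i, c i * (if x i then (1:ℝ) else -1) := by
    intro x
    rw [hS, hS₁]
    have e1 : ∑ i, a i * (if x i then (1:ℝ) else -1)
        = (∑ i ∈ F, a i * (if x i then (1:ℝ) else -1)) +
          ∑ i ∈ Finset.univ.filter (fun i : Fin n => ¬((i:ℕ) + 1 ≤ τ)),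
            a i * (if x i then (1:ℝ) else -1) :=
      (Finset.sum_filter_add_sum_filter_not _ _ _).symm
    have e2 : ∑ i, c i * (if x i then (1:ℝ) else -1)
        = (∑ i ∈ F, c i * (if x i then (1:ℝ) else -1)) +
          ∑ i ∈ Finset.univ.filter (fun i : Fin n => ¬((i:ℕ) + 1 ≤ τ)),
            c i * (if x i then (1:ℝ) else -1) :=
      (Finset.sum_filter_add_sum_filter_not _ _ _).symm
    have e3 : ∑ i ∈ F, c i * (if x i then (1:ℝ) else -1) = 0 := by
      apply Finset.sum_eq_zero
      intro i hi
      rw [hF, Finset.mem_filter] at hi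
      simp [hc, Nat.lt_of_succ_le hi.2]
    have e4 : ∑ i ∈ Finset.univ.filter (fun i : Fin n => ¬((i:ℕ) + 1 ≤ τ)),
        (c i - a i) * (if x i then (1:ℝ) else -1)
        = (A - 1 - a t) * (if x t then (1:ℝ) else -1) := by
      rw [Finset.sum_eq_single t]
      · have : c t = A - 1 := by simp [hc, ht]
        rw [this]
      · intro j hj hjt
        rw [Finset.mem_filter] at hj
        have hjτ : (j : ℕ) ≠ τ := fun h => hjt (Fin.ext (by simp [ht, h]))
        have : c j = a j := by simp [hc, hj.2, hjτ, show ¬ (j:ℕ) < τ by have := hj.2; omega]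
        rw [this]; ring
      · intro h
        refine absurd ?_ h
        simp only [Finset.mem_filter, Finset.mem_univ, true_and, ht]
        omega
    have e5 : ∑ i ∈ Finset.univ.filter (fun i : Fin n => ¬((i:ℕ) + 1 ≤ τ)),
        (c i - a i) * (if x i then (1:ℝ) else -1)
        = (∑ i ∈ Finset.univ.filter (fun i : Fin n => ¬((i:ℕ) + 1 ≤ τ)),
            c i * (if x i then (1:ℝ) else -1)) -
          ∑ i ∈ Finset.univ.filter (fun i : Fin n => ¬((i:ℕ) + 1 ≤ τ)),
            a i * (if x i then (1:ℝ) else -1) := by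
      rw [← Finset.sum_sub_distrib]
      apply Finset.sum_congr rfl
      intro i _; ring
    have hAS : A - 1 - a t = Sτ - 1 := by rw [hAval]; ring
    rw [e5, hAS] at e4
    rw [e1, e2, e3]
    cases hxt : x t <;> simp [hxt] at e4 ⊢ <;> linarith
  have hsum : ∑ x : Fin n → Bool, (S x - S₁ x) ^ 2 = 2 ^ n * ∑ i, c i ^ 2 := by
    rw [Finset.sum_congr rfl (fun x _ => by rw [key x]), rad_sumsq]
  set T : ℝ := ∑ i ∈ Finset.univ.filter (fun i : Fin n => τ + 2 ≤ (i : ℕ) + 1), a i ^ 2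
    with hT
  have hT0 : 0 ≤ T := Finset.sum_nonneg fun i _ => sq_nonneg _
  have hcsq : ∑ i, c i ^ 2 = (A - 1) ^ 2 + T := by
    have e1 : ∑ i, c i ^ 2 = (∑ i ∈ F, c i ^ 2) +
        ∑ i ∈ Finset.univ.filter (fun i : Fin n => ¬((i:ℕ) + 1 ≤ τ)), c i ^ 2 :=
      (Finset.sum_filter_add_sum_filter_not _ _ _).symm
    have e2 : ∑ i ∈ F, c i ^ 2 = 0 := by
      apply Finset.sum_eq_zero
      intro i hi
      rw [hF, Finset.mem_filter] at hi
      simp [hc, Nat.lt_of_succ_le hi.2]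
    have e3 : Finset.univ.filter (fun i : Fin n => ¬((i:ℕ) + 1 ≤ τ))
        = insert t (Finset.univ.filter (fun i : Fin n => τ + 2 ≤ (i : ℕ) + 1)) := by
      ext i
      simp [ht, Fin.ext_iff]
      omega
    have htG : t ∉ Finset.univ.filter (fun i : Fin n => τ + 2 ≤ (i : ℕ) + 1) := by
      simp [ht]
    have e4 : ∑ i ∈ Finset.univ.filter (fun i : Fin n => τ + 2 ≤ (i : ℕ) + 1),
        c i ^ 2 = T := by
      rw [hT]
      apply Finset.sum_congr rfl
      intro i hi
      rw [Finset.mem_filter] at hi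
      have h1 : ¬((i:ℕ) + 1 ≤ τ) := by omega
      have h2 : (i:ℕ) ≠ τ := by omega
      simp [hc, h1, h2, show ¬ (i:ℕ) < τ by omega]
    have hct : c t = A - 1 := by simp [hc, ht]
    rw [e1, e2, e3, Finset.sum_insert htG, e4, hct]
    ring
  rw [hsum, hcsq]
  have h2n : (2:ℝ) ^ n ≠ 0 := by positivity
  rw [mul_comm, mul_div_assoc, div_self h2n, mul_one]
  calc Real.sqrt ((A - 1) ^ 2 + T)
      ≤ Real.sqrt ((A - 1) ^ 2) + Real.sqrt T := sqrt_add_le' _ _ (sq_nonneg _) hT0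
    _ = |A - 1| + Real.sqrt T := by rw [Real.sqrt_sq_eq_abs]
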